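/- Let H be a real inner product space and let m₀ > 0, k₂ > 0, L > 0. Then there exists a constant C > 0 such that for all x, y ∈ H and all real numbers b ≥ 0 and c with ‖y‖ ≤ b: m₀‖x − y‖² + k₂ b² + L c² ≥ C(‖x‖² + ‖y‖² + b² + c²). (This is the core estimate establishing coercivity of the bilinear form for the single-crystal gradient plasticity model with isotropic hardening, where the constraint ‖y‖ ≤ b reflects that test functions satisfy |qᵅ| ≤ βᵅ.) -/
import Mathlib

/-- Core coercivity estimate for the bilinear form of the single-crystal gradient
plasticity model with isotropic hardening: for `m₀, k₂, L > 0` there is `C > 0` such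
that for all `x, y` in a real inner product space, all `b ≥ 0` with `‖y‖ ≤ b` and all
`c ∈ ℝ`, `m₀‖x − y‖² + k₂ b² + L c² ≥ C(‖x‖² + ‖y‖² + b² + c²)`. -/
theorem stmt_2 (H : Type*) [NormedAddCommGroup H] [InnerProductSpace ℝ H]
    (m₀ k₂ L : ℝ) (hm₀ : 0 < m₀) (hk₂ : 0 < k₂) (hL : 0 < L) :
    ∃ C > 0, ∀ (x y : H) (b c : ℝ), 0 ≤ b → ‖y‖ ≤ b →
      m₀ * ‖x - y‖ ^ 2 + k₂ * b ^ 2 + L * c ^ 2 ≥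
        C * (‖x‖ ^ 2 + ‖y‖ ^ 2 + b ^ 2 + c ^ 2) := by
  refine ⟨min (m₀ / 2) (min (k₂ / 4) L), by positivity, ?_⟩
  intro x y b c hb hyb
  have h1 : ‖x‖ ≤ ‖x - y‖ + ‖y‖ := by simpa using norm_add_le (x - y) y
  have h2 : (0:ℝ) ≤ ‖x - y‖ := norm_nonneg _
  have h3 : (0:ℝ) ≤ ‖y‖ := norm_nonneg _
  have h4 : (0:ℝ) ≤ ‖x‖ := norm_nonneg _
  have hm : min (m₀ / 2) (min (k₂ / 4) L) ≤ m₀ / 2 := min_le_left _ _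
  have hk : min (m₀ / 2) (min (k₂ / 4) L) ≤ k₂ / 4 := le_trans (min_le_right _ _) (min_le_left _ _)
  have hl : min (m₀ / 2) (min (k₂ / 4) L) ≤ L := le_trans (min_le_right _ _) (min_le_right _ _)
  have hc : 0 < min (m₀ / 2) (min (k₂ / 4) L) := by positivity
  have hy2 : ‖y‖ ^ 2 ≤ b ^ 2 := by nlinarith
  have hx2 : ‖x‖ ^ 2 ≤ 2 * ‖x - y‖ ^ 2 + 2 * b ^ 2 := by
    nlinarith [sq_nonneg (‖x - y‖ - ‖y‖)]
  nlinarith [mul_le_mul_of_nonneg_left hx2 hc.le, mul_le_mul_of_nonneg_left hy2 hc.le,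
    mul_le_mul_of_nonneg_right hm (sq_nonneg ‖x - y‖),
    mul_le_mul_of_nonneg_right hk (sq_nonneg b),
    mul_le_mul_of_nonneg_right hl (sq_nonneg c)]
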